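/- Let c_1, c_2, c_3, c_4 be the unique complex numbers satisfying the linear system c_1λ_1^k + c_2λ_2^k + c_3λ_3^k + c_4λ_4^k = a_k for k = 1,2,3,4 with a_1=1, a_2=1, a_3=2, a_4=4, where λ_1 = (1-√(2√5+3))/2, λ_2 = (1+√(2√5+3))/2, λ_3 = (1-i√(2√5-3))/2, λ_4 = (1+i√(2√5-3))/2. Then c_1λ_1 = ((√5+1)/4)(1/√5 - 1/√(2√5+3)), c_2λ_2 = ((√5+1)/4)(1/√5 + 1/√(2√5+3)), c_3λ_3 = ((√5-1)/4)(1/√5 - i/√(2√5-3)), and c_4λ_4 = ((√5-1)/4)(1/√5 + i/√(2√5-3)). -/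

import Mathlib

open Complex in
/-- Solving the Vandermonde-type linear system
`c₁λ₁^k + c₂λ₂^k + c₃λ₃^k + c₄λ₄^k = a_k` for `k = 1,2,3,4` with
`a₁ = 1, a₂ = 1, a₃ = 2, a₄ = 4`, where the `λ`'s are the four roots of
`x⁴ - 2x³ + x - 1`. -/
theorem linear_system_solution (l1 l2 l3 l4 c1 c2 c3 c4 : ℂ)
    (hl1 : l1 = (1 - (Real.sqrt (2 * Real.sqrt 5 + 3) : ℝ)) / 2)
    (hl2 : l2 = (1 + (Real.sqrt (2 * Real.sqrt 5 + 3) : ℝ)) / 2)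
    (hl3 : l3 = (1 - I * (Real.sqrt (2 * Real.sqrt 5 - 3) : ℝ)) / 2)
    (hl4 : l4 = (1 + I * (Real.sqrt (2 * Real.sqrt 5 - 3) : ℝ)) / 2)
    (e1 : c1 * l1 + c2 * l2 + c3 * l3 + c4 * l4 = 1)
    (e2 : c1 * l1 ^ 2 + c2 * l2 ^ 2 + c3 * l3 ^ 2 + c4 * l4 ^ 2 = 1)
    (e3 : c1 * l1 ^ 3 + c2 * l2 ^ 3 + c3 * l3 ^ 3 + c4 * l4 ^ 3 = 2)
    (e4 : c1 * l1 ^ 4 + c2 * l2 ^ 4 + c3 * l3 ^ 4 + c4 * l4 ^ 4 = 4) :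
    c1 * l1 = ((Real.sqrt 5 + 1) / 4 : ℝ) *
        ((1 / Real.sqrt 5 : ℝ) - (1 / Real.sqrt (2 * Real.sqrt 5 + 3) : ℝ)) ∧
      c2 * l2 = ((Real.sqrt 5 + 1) / 4 : ℝ) *
        ((1 / Real.sqrt 5 : ℝ) + (1 / Real.sqrt (2 * Real.sqrt 5 + 3) : ℝ)) ∧
      c3 * l3 = ((Real.sqrt 5 - 1) / 4 : ℝ) *
        ((1 / Real.sqrt 5 : ℝ) - I * (1 / Real.sqrt (2 * Real.sqrt 5 - 3) : ℝ)) ∧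
      c4 * l4 = ((Real.sqrt 5 - 1) / 4 : ℝ) *
        ((1 / Real.sqrt 5 : ℝ) + I * (1 / Real.sqrt (2 * Real.sqrt 5 - 3) : ℝ)) := by
  subst hl1 hl2 hl3 hl4
  have hsq5 : Real.sqrt 5 ^ 2 = 5 := Real.sq_sqrt (by norm_num)
  have hs5nn : (0:ℝ) ≤ Real.sqrt 5 := Real.sqrt_nonneg 5
  have hs5gt : (3/2 : ℝ) < Real.sqrt 5 := by nlinarith
  have hupos : (0:ℝ) < Real.sqrt (2 * Real.sqrt 5 + 3) := Real.sqrt_pos.mpr (by nlinarith)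
  have hvpos : (0:ℝ) < Real.sqrt (2 * Real.sqrt 5 - 3) := Real.sqrt_pos.mpr (by nlinarith)
  set S : ℂ := ((Real.sqrt 5 : ℝ) : ℂ) with hSdef
  set U : ℂ := ((Real.sqrt (2 * Real.sqrt 5 + 3) : ℝ) : ℂ) with hUdef
  set V : ℂ := ((Real.sqrt (2 * Real.sqrt 5 - 3) : ℝ) : ℂ) with hVdef
  have hS : S ^ 2 = 5 := by rw [hSdef, ← Complex.ofReal_pow, hsq5]; norm_num
  have hU : U ^ 2 = 2 * S + 3 := by
    rw [hUdef, hSdef, ← Complex.ofReal_pow, Real.sq_sqrt (by nlinarith)]; push_cast; ring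
  have hV : V ^ 2 = 2 * S - 3 := by
    rw [hVdef, hSdef, ← Complex.ofReal_pow, Real.sq_sqrt (by nlinarith)]; push_cast; ring
  have hI2 : (I : ℂ) ^ 2 = -1 := Complex.I_sq
  have hS0 : S ≠ 0 := by
    rw [hSdef]; exact_mod_cast Complex.ofReal_ne_zero.mpr (by positivity)
  have hU0 : U ≠ 0 := by
    rw [hUdef]; exact_mod_cast Complex.ofReal_ne_zero.mpr (ne_of_gt hupos)
  have hV0 : V ≠ 0 := by
    rw [hVdef]; exact_mod_cast Complex.ofReal_ne_zero.mpr (ne_of_gt hvpos)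
  have key1 : c1 * ((1 - U) / 2) * (4 * S * U) = (S + 1) * (U - S) := by
    linear_combination ((-1) + (-1)*U + 1*S + 1*S*U) * e1 + ((-2)*U + (-2)*S) * e2 + (6 + 2*U) * e3 + ((-4)) * e4 + (1*I^2*c4 + 1*I^2*c3 + 1*I^4*c4 + 1*I^4*c3) * hS + ((-1/2)*U*c1 + (1/2)*U^2*c1) * hU + ((-3/4)*I^2*c4 + (-3/4)*I^2*c3 + (-3/4)*I^4*c4 + (-3/4)*I^4*c3 + (1/4)*V*I^3*c4 + (-1/4)*V*I^3*c3 + (1/4)*V^2*I^4*c4 + (1/4)*V^2*I^4*c3 + (-1/4)*U*I^2*c4 + (-1/4)*U*I^2*c3 + (-1/4)*U*V*I^3*c4 + (1/4)*U*V*I^3*c3 + (1/2)*S*I^2*c4 + (1/2)*S*I^2*c3 + (1/2)*S*I^4*c4 + (1/2)*S*I^4*c3) * hV + ((29/4)*I^2*c4 + (29/4)*I^2*c3 + (-3/4)*V*I*c4 + (3/4)*V*I*c3 + (3/4)*U*c4 + (3/4)*U*c3 + (3/4)*U*V*I*c4 + (-3/4)*U*V*I*c3 + (-3)*S*I^2*c4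 + (-3)*S*I^2*c3 + (1/2)*S*V*I*c4 + (-1/2)*S*V*I*c3 + (-1/2)*S*U*c4 + (-1/2)*S*U*c3 + (-1/2)*S*U*V*I*c4 + (1/2)*S*U*V*I*c3) * hI2 + hS
  have key2 : c2 * ((1 + U) / 2) * (4 * S * U) = (S + 1) * (U + S) := by
    linear_combination (1 + (-1)*U + (-1)*S + 1*S*U) * e1 + ((-2)*U + 2*S) * e2 + ((-6) + 2*U) * e3 + (4) * e4 + ((-1)*I^2*c4 + (-1)*I^2*c3 + (-1)*I^4*c4 + (-1)*I^4*c3) * hS + ((-1/2)*U*c2 + (-1/2)*U^2*c2) * hU + ((3/4)*I^2*c4 + (3/4)*I^2*c3 + (3/4)*I^4*c4 + (3/4)*I^4*c3 + (-1/4)*V*I^3*c4 + (1/4)*V*I^3*c3 + (-1/4)*V^2*I^4*c4 + (-1/4)*V^2*I^4*c3 + (-1/4)*U*I^2*c4 + (-1/4)*U*I^2*c3 + (-1/4)*U*V*I^3*c4 + (1/4)*U*V*I^3*c3 + (-1/2)*S*I^2*c4 + (-1/2)*S*I^2*c3 + (-1/2)*S*I^4*c4 + (-1/2)*S*I^4*c3)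 * hV + ((-29/4)*I^2*c4 + (-29/4)*I^2*c3 + (3/4)*V*I*c4 + (-3/4)*V*I*c3 + (3/4)*U*c4 + (3/4)*U*c3 + (3/4)*U*V*I*c4 + (-3/4)*U*V*I*c3 + 3*S*I^2*c4 + 3*S*I^2*c3 + (-1/2)*S*V*I*c4 + (1/2)*S*V*I*c3 + (-1/2)*S*U*c4 + (-1/2)*S*U*c3 + (-1/2)*S*U*V*I*c4 + (1/2)*S*U*V*I*c3) * hI2 - hS
  have key3 : c3 * ((1 - I * V) / 2) * (4 * S * V) = (S - 1) * (V - I * S) := by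
    linear_combination ((-1)*I + 1*V + (-1)*S*I + 1*S*V) * e1 + (2*V + 2*S*I) * e2 + (6*I + (-2)*V) * e3 + ((-4)*I) * e4 + ((-1)*I*c4 + (-3)*I*c3 + (-2)*I^3*c3 + 1*I^5*c4 + 1*I^5*c3) * hS + ((1/4)*V*c2 + (1/4)*V*c1 + (1/4)*U*I*c2 + (-1/4)*U*I*c1 + (1/4)*U*V*c2 + (-1/4)*U*V*c1 + (1/4)*U^2*I*c2 + (1/4)*U^2*I*c1) * hU + ((-3/4)*I*c4 + (3/4)*I*c3 + (-3/2)*I^3*c4 + (-3/4)*I^5*c4 + (-3/4)*I^5*c3 + (1/4)*V*I^2*c4 + (1/4)*V*I^2*c3 + (1/4)*V*I^4*c4 + (-1/4)*V*I^4*c3 + (1/4)*V^2*I^3*c4 + (-1/4)*V^2*I^3*c3 + (1/4)*V^2*I^5*c4 + (1/4)*V^2*I^5*c3 + (-1/2)*S*I*c4 + (-3/2)*S*I*c3 + (-1)*S*I^3*c3 + (1/2)*S*I^5*c4 + (1/2)*S*I^5*c3) * hV + ((-11/4)*I*c4 + (-69/4)*I*c3 + (29/4)*I^3*c4 + (29/4)*I^3*c3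 + (-3/4)*V*c4 + (-3/4)*V*c3 + (-3/4)*V*I^2*c4 + (3/4)*V*I^2*c3 + 6*S*I*c3 + (-3)*S*I^3*c4 + (-3)*S*I^3*c3 + (-1/2)*S*V*c4 + (3/2)*S*V*c3 + (1/2)*S*V*I^2*c4 + (-1/2)*S*V*I^2*c3) * hI2 + I * hS
  have key4 : c4 * ((1 + I * V) / 2) * (4 * S * V) = (S - 1) * (V + I * S) := by
    linear_combination (1*I + 1*V + 1*S*I + 1*S*V) * e1 + (2*V + (-2)*S*I) * e2 + ((-6)*I + (-2)*V) * e3 + (4*I) * e4 + (3*I*c4 + 1*I*c3 + 2*I^3*c4 + (-1)*I^5*c4 + (-1)*I^5*c3) * hS + ((1/4)*V*c2 + (1/4)*V*c1 + (-1/4)*U*I*c2 + (1/4)*U*I*c1 + (1/4)*U*V*c2 + (-1/4)*U*V*c1 + (-1/4)*U^2*I*c2 + (-1/4)*U^2*I*c1) * hU + ((-3/4)*I*c4 + (3/4)*I*c3 + (3/2)*I^3*c3 + (3/4)*I^5*c4 + (3/4)*I^5*c3 + (1/4)*V*I^2*c4 + (1/4)*V*I^2*c3 + (-1/4)*V*I^4*c4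 + (1/4)*V*I^4*c3 + (1/4)*V^2*I^3*c4 + (-1/4)*V^2*I^3*c3 + (-1/4)*V^2*I^5*c4 + (-1/4)*V^2*I^5*c3 + (3/2)*S*I*c4 + (1/2)*S*I*c3 + 1*S*I^3*c4 + (-1/2)*S*I^5*c4 + (-1/2)*S*I^5*c3) * hV + ((69/4)*I*c4 + (11/4)*I*c3 + (-29/4)*I^3*c4 + (-29/4)*I^3*c3 + (-3/4)*V*c4 + (-3/4)*V*c3 + (3/4)*V*I^2*c4 + (-3/4)*V*I^2*c3 + (-6)*S*I*c4 + 3*S*I^3*c4 + 3*S*I^3*c3 + (3/2)*S*V*c4 + (-1/2)*S*V*c3 + (-1/2)*S*V*I^2*c4 + (1/2)*S*V*I^2*c3) * hI2 - I * hS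
  refine ⟨?_, ?_, ?_, ?_⟩ <;> push_cast <;> rw [← hSdef] <;> field_simp
  · have hUi : U * U⁻¹ = 1 := mul_inv_cancel₀ hU0
    linear_combination (2 / U) * key1 + (2 * (S + 1) - 4 * c1 * (1 - U) * S) * hUi
  · have hUi : U * U⁻¹ = 1 := mul_inv_cancel₀ hU0
    linear_combination (2 / U) * key2 + (2 * (S + 1) - 4 * c2 * (1 + U) * S) * hUi
  · have hVi : V * V⁻¹ = 1 := mul_inv_cancel₀ hV0
    linear_combination (2 / V) * key3 + (2 * (S - 1) - 4 * c3 * (1 - I * V) * S) * hVi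
  · have hVi : V * V⁻¹ = 1 := mul_inv_cancel₀ hV0
    linear_combination (2 / V) * key4 + (2 * (S - 1) - 4 * c4 * (1 + I * V) * S) * hVi
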